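/- For every x with 0 < x ≤ 1/√2, the inverse of the binary entropy function satisfies h₂^{−1}(x) ≥ x/(8·log₂(1/x)); equivalently, h₂( x/(8·log₂(1/x)) ) ≤ x, where h₂(y) = −y·log₂ y − (1−y)·log₂(1−y) and h₂^{−1} denotes the inverse of h₂ restricted to [0, 1/2]. -/

import Mathlib

/-- The binary entropy function `h₂(y) = -y·log₂ y - (1-y)·log₂(1-y)`
(with `h₂(0) = h₂(1) = 0`, since `log 0 = 0` in Mathlib). -/
noncomputable def h2 (y : ℝ) : ℝ := -y * Real.logb 2 y - (1 - y) * Real.logb 2 (1 - y)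

/-- The inverse of `h₂` restricted to `[0, 1/2]`. -/
noncomputable def h2inv : ℝ → ℝ := Function.invFunOn h2 (Set.Icc 0 (1 / 2))

lemma h2_eq (y : ℝ) : h2 y = Real.binEntropy y / Real.log 2 := by
  unfold h2 Real.binEntropy Real.logb
  rw [Real.log_inv, Real.log_inv]
  ring

lemma h2_half : h2 (1/2) = 1 := by
  rw [h2_eq, show (1/2 : ℝ) = 2⁻¹ by norm_num, Real.binEntropy_two_inv]
  have := Real.log_pos (by norm_num : (1:ℝ) < 2)
  field_simp

lemma h2_zero : h2 0 = 0 := by simp [h2]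

lemma h2_continuous : Continuous h2 := by
  simp only [funext h2_eq]
  exact Real.binEntropy_continuous.div_const _

lemma h2_strictMonoOn : StrictMonoOn h2 (Set.Icc 0 (1/2)) := by
  have h2pos := Real.log_pos (by norm_num : (1:ℝ) < 2)
  intro a ha b hb hab
  simp only [h2_eq]
  have h12 : (1/2 : ℝ) = 2⁻¹ := by norm_num
  rw [h12] at ha hb
  exact div_lt_div_of_pos_right (Real.binEntropy_strictMonoOn ha hb hab) h2pos

/-- Upper bound: `h2 y ≤ (y·log(1/y) + y)/log 2` for `0 < y < 1`. -/
lemma h2_le (y : ℝ) (hy0 : 0 < y) (hy1 : y < 1) :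
    h2 y ≤ (-y * Real.log y + y) / Real.log 2 := by
  have h2pos := Real.log_pos (by norm_num : (1:ℝ) < 2)
  rw [h2_eq]
  apply div_le_div_of_nonneg_right ?_ (le_of_lt h2pos) |>.trans_eq rfl
  -- binEntropy y = -y log y - (1-y) log (1-y) ≤ -y log y + y
  have h1y : 0 < 1 - y := by linarith
  have key : -((1 - y) * Real.log (1 - y)) ≤ y := by
    have := Real.log_le_sub_one_of_pos (show 0 < (1 - y)⁻¹ by positivity)
    rw [Real.log_inv] at this
    have h2' : -Real.log (1 - y) ≤ (1 - y)⁻¹ - 1 := this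
    calc -((1 - y) * Real.log (1 - y)) = (1 - y) * (-Real.log (1 - y)) := by ring
      _ ≤ (1 - y) * ((1 - y)⁻¹ - 1) := by
          exact mul_le_mul_of_nonneg_left h2' (le_of_lt h1y)
      _ = 1 - (1 - y) := by field_simp
      _ = y := by ring
  have hbe : Real.binEntropy y = -y * Real.log y - (1 - y) * Real.log (1 - y) := by
    unfold Real.binEntropy
    rw [Real.log_inv, Real.log_inv]; ring
  rw [hbe]; linarith

/-- For `0 < x ≤ 1/√2` we have `h₂⁻¹(x) ≥ x/(8·log₂(1/x))`; equivalently
`h₂(x/(8·log₂(1/x))) ≤ x`. -/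
theorem binary_entropy_inverse_bound (x : ℝ) (hx0 : 0 < x) (hx : x ≤ 1 / Real.sqrt 2) :
    x / (8 * Real.logb 2 (1 / x)) ≤ h2inv x ∧
      h2 (x / (8 * Real.logb 2 (1 / x))) ≤ x := by
  have hlog2 : (0.6931471803 : ℝ) < Real.log 2 := Real.log_two_gt_d9
  have hlog2' : Real.log 2 < 0.6931471808 := Real.log_two_lt_d9
  have h2pos : (0:ℝ) < Real.log 2 := by linarith
  set L := Real.logb 2 (1/x) with hL
  -- basic facts about x
  have hsqrt2 : (1:ℝ) < Real.sqrt 2 := by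
    rw [show (1:ℝ) = Real.sqrt 1 by simp]
    exact Real.sqrt_lt_sqrt (by norm_num) (by norm_num)
  have hx1 : x < 1 := lt_of_le_of_lt hx (by rw [div_lt_one (by linarith)]; exact hsqrt2)
  have hinvx : Real.sqrt 2 ≤ 1 / x := by
    rw [le_div_iff₀ hx0]
    calc Real.sqrt 2 * x ≤ Real.sqrt 2 * (1 / Real.sqrt 2) :=
      mul_le_mul_of_nonneg_left hx (by positivity)
    _ = 1 := by field_simp
  have hLhalf : (1/2 : ℝ) ≤ L := by
    rw [hL]
    calc (1/2 : ℝ) = Real.logb 2 (Real.sqrt 2) := by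
          rw [Real.logb, Real.log_sqrt (by norm_num), div_div, mul_comm, ← div_div,
            div_self (ne_of_gt h2pos)]
      _ ≤ Real.logb 2 (1/x) :=
          Real.logb_le_logb_of_le (by norm_num) (by positivity) hinvx
  have hLpos : 0 < L := by linarith
  -- the point y
  set y := x / (8 * L) with hy
  have hypos : 0 < y := by positivity
  have hyx4 : y ≤ x / 4 := by
    rw [hy, div_le_div_iff₀ (by positivity) (by norm_num)]
    nlinarith
  have hyhalf : y < 1/2 := by nlinarith
  -- log L ≤ 2L - 1 - log 2
  have hlogL : Real.log L ≤ 2 * L - 1 - Real.log 2 := by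
    have := Real.log_le_sub_one_of_pos (show (0:ℝ) < 2 * L by linarith)
    rw [Real.log_mul (by norm_num) (ne_of_gt hLpos)] at this
    linarith
  -- express log(1/x) = L * log 2
  have hlogx : Real.log (1/x) = L * Real.log 2 := by
    rw [hL, Real.logb]; field_simp
  -- main bound: h2 y ≤ x
  have hmain : h2 y ≤ x := by
    have hb := h2_le y hypos (by linarith)
    refine hb.trans ?_
    rw [div_le_iff₀ h2pos]
    -- -y log y + y ≤ x log 2
    have hylog : Real.log y = Real.log x - (Real.log 8 + Real.log L) := by
      rw [hy, Real.log_div (ne_of_gt hx0) (by positivity),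
        Real.log_mul (by norm_num) (ne_of_gt hLpos)]
    have hlog8 : Real.log 8 = 3 * Real.log 2 := by
      rw [show (8:ℝ) = 2^3 by norm_num, Real.log_pow]; norm_num
    have hlogx' : Real.log x = -(L * Real.log 2) := by
      have : Real.log (1/x) = -Real.log x := by
        rw [one_div, Real.log_inv]
      linarith [hlogx]
    rw [hylog, hlog8, hlogx', hy]
    have key : 1 + L * Real.log 2 + 3 * Real.log 2 + Real.log L ≤ 8 * L * Real.log 2 := by
      nlinarith [hlogL, hLhalf, hlog2]
    have h8L : (0:ℝ) < 8 * L := by positivity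
    calc -(x / (8*L)) * (-(L * Real.log 2) - (3 * Real.log 2 + Real.log L)) + x / (8*L)
        = x / (8*L) * (1 + L * Real.log 2 + 3 * Real.log 2 + Real.log L) := by ring
      _ ≤ x / (8*L) * (8 * L * Real.log 2) :=
          mul_le_mul_of_nonneg_left key (by positivity)
      _ = x * Real.log 2 := by field_simp
  -- invFunOn part
  have hx1' : x ≤ 1 := le_of_lt hx1
  have hexists : ∃ z ∈ Set.Icc (0:ℝ) (1/2), h2 z = x := by
    have hsub : Set.Icc (h2 0) (h2 (1/2)) ⊆ h2 '' Set.Icc 0 (1/2) :=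
      intermediate_value_Icc (by norm_num) (h2_continuous.continuousOn)
    have hxmem : x ∈ Set.Icc (h2 0) (h2 (1/2)) := by
      rw [h2_zero, h2_half]; exact ⟨le_of_lt hx0, hx1'⟩
    obtain ⟨z, hz, hzx⟩ := hsub hxmem
    exact ⟨z, hz, hzx⟩
  have hwmem : h2inv x ∈ Set.Icc (0:ℝ) (1/2) := by
    obtain ⟨z, hz, hzx⟩ := hexists
    exact Function.invFunOn_mem ⟨z, hz, hzx⟩
  have hweq : h2 (h2inv x) = x := by
    obtain ⟨z, hz, hzx⟩ := hexists
    exact Function.invFunOn_eq ⟨z, hz, hzx⟩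
  have hymem : y ∈ Set.Icc (0:ℝ) (1/2) := ⟨le_of_lt hypos, le_of_lt hyhalf⟩
  constructor
  · by_contra hcon
    push_neg at hcon
    have := h2_strictMonoOn hwmem hymem hcon
    rw [hweq] at this
    linarith
  · exact hmain
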